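/- arXiv:2503.01034 — 3 statements merged into one kernel-verified Lean document; each statement's English description precedes it below -/
import Mathlib

section
/- Let X be a finite set of n points in ℝ^d and A ⊆ X a subset of k points with 1 ≤ k < n. Let ν be a σ-finite measure on ℝ^d and for each z ∈ X let q(·|z) : ℝ^d → (0,∞) be an everywhere strictly positive measurable probability density with respect to ν. Let g(·, z) : ℝ^d → ℝ be measurable with ∫ g(m, z) q(m|z) dν(m) finite for every z ∈ X. For λ ∈ [0,1] define the SISS loss ℓ_λ as the average over x ∈ X and a ∈ A of ∫ [ (n/(n−k)) · (q(m|x)/q_λ(m|x,a)) · g(m, x) − (k/(n−k)) · (q(m|a)/q_λ(m|x,a)) · g(m, a) ] · q_λ(m|x,a) dν(m), where q_λ(m|x,a) = (1−λ)q(m|x) + λq(m|a). Then for every λ ∈ [0,1], ℓ_λ equals the naive deletion loss: ℓ_λ = (1/(n−k)) Σ_{x ∈ X\A} ∫ g(m, x) q(m|x) dν(m). -/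
open MeasureTheory

/-- The SISS loss `ℓ_λ` equals the naive deletion loss `L_{X\A}` for every
`λ ∈ [0,1]`. -/
theorem siss_equals_naive_deletion {d : ℕ} [DecidableEq (EuclideanSpace ℝ (Fin d))]
    (X A : Finset (EuclideanSpace ℝ (Fin d)))
    (hA : A ⊆ X) (hk : 1 ≤ A.card) (hkn : A.card < X.card)
    (ν : Measure (EuclideanSpace ℝ (Fin d))) [SigmaFinite ν]
    (q : EuclideanSpace ℝ (Fin d) → EuclideanSpace ℝ (Fin d) → ℝ)
    (hqm : ∀ z ∈ X, Measurable (q z))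
    (hqpos : ∀ z ∈ X, ∀ m, 0 < q z m)
    (hqP : ∀ z ∈ X,
      IsProbabilityMeasure (ν.withDensity (fun m => ENNReal.ofReal (q z m))))
    (g : EuclideanSpace ℝ (Fin d) → EuclideanSpace ℝ (Fin d) → ℝ)
    (hgm : ∀ z ∈ X, Measurable (fun m => g m z))
    (hgint : ∀ z ∈ X, Integrable (fun m => g m z * q z m) ν)
    (lam : ℝ) (hlam : lam ∈ Set.Icc (0 : ℝ) 1) :
    ((X.card : ℝ) * (A.card : ℝ))⁻¹ *
      ∑ x ∈ X, ∑ a ∈ A,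
        ∫ m,
          (((X.card : ℝ) / ((X.card : ℝ) - (A.card : ℝ)))
              * (q x m / ((1 - lam) * q x m + lam * q a m)) * g m x
            - ((A.card : ℝ) / ((X.card : ℝ) - (A.card : ℝ)))
              * (q a m / ((1 - lam) * q x m + lam * q a m)) * g m a)
          * ((1 - lam) * q x m + lam * q a m) ∂ν
    = (1 / ((X.card : ℝ) - (A.card : ℝ))) * ∑ x ∈ X \ A, ∫ m, g m x * q x m ∂ν := by
  obtain ⟨hl0, hl1⟩ := hlam
  have hkpos : (0:ℝ) < (A.card : ℝ) := by exact_mod_cast hk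
  have hklt : (A.card : ℝ) < (X.card : ℝ) := by exact_mod_cast hkn
  have hnpos : (0:ℝ) < (X.card : ℝ) := lt_trans hkpos hklt
  have hnk : (0:ℝ) < (X.card : ℝ) - (A.card : ℝ) := by linarith
  have key : ∀ x ∈ X, ∀ a ∈ A,
      (∫ m,
          (((X.card : ℝ) / ((X.card : ℝ) - (A.card : ℝ)))
              * (q x m / ((1 - lam) * q x m + lam * q a m)) * g m x
            - ((A.card : ℝ) / ((X.card : ℝ) - (A.card : ℝ)))
              * (q a m / ((1 - lam) * q x m + lam * q a m)) * g m a)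
          * ((1 - lam) * q x m + lam * q a m) ∂ν)
      = ((X.card : ℝ) / ((X.card : ℝ) - (A.card : ℝ))) * ∫ m, g m x * q x m ∂ν
        - ((A.card : ℝ) / ((X.card : ℝ) - (A.card : ℝ))) * ∫ m, g m a * q a m ∂ν := by
    intro x hx a ha
    have haX := hA ha
    have heq : (fun m =>
        (((X.card : ℝ) / ((X.card : ℝ) - (A.card : ℝ)))
              * (q x m / ((1 - lam) * q x m + lam * q a m)) * g m x
            - ((A.card : ℝ) / ((X.card : ℝ) - (A.card : ℝ)))
              * (q a m / ((1 - lam) * q x m + lam * q a m)) * g m a)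
          * ((1 - lam) * q x m + lam * q a m))
        = fun m => ((X.card : ℝ) / ((X.card : ℝ) - (A.card : ℝ))) * (g m x * q x m)
            - ((A.card : ℝ) / ((X.card : ℝ) - (A.card : ℝ))) * (g m a * q a m) := by
      funext m
      have h1 := hqpos x hx m
      have h2 := hqpos a haX m
      have hQ : (1 - lam) * q x m + lam * q a m ≠ 0 := by
        rcases eq_or_lt_of_le hl1 with h | h
        · have : (1 - lam) * q x m + lam * q a m = q a m := by rw [h]; ring
          rw [this]; exact h2.ne'
        · have e1 : 0 < (1 - lam) * q x m := mul_pos (by linarith) h1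
          have e2 : 0 ≤ lam * q a m := mul_nonneg hl0 h2.le
          positivity
      linear_combination ((X.card : ℝ) / ((X.card : ℝ) - (A.card : ℝ)) * q x m * g m x - (A.card : ℝ) / ((X.card : ℝ) - (A.card : ℝ)) * q a m * g m a) * mul_inv_cancel₀ hQ
    rw [heq, integral_sub ((hgint x hx).const_mul _) ((hgint a haX).const_mul _),
      integral_const_mul, integral_const_mul]
  rw [Finset.sum_congr rfl (fun x hx => Finset.sum_congr rfl (fun a ha => key x hx a ha))]
  have hsd : ∑ x ∈ X \ A, ∫ m, g m x * q x m ∂ν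
      = (∑ x ∈ X, ∫ m, g m x * q x m ∂ν) - ∑ a ∈ A, ∫ m, g m a * q a m ∂ν :=
    Finset.sum_sdiff_eq_sub hA
  rw [hsd]
  simp only [Finset.sum_sub_distrib, Finset.sum_const, nsmul_eq_mul, ← Finset.mul_sum,
    ← Finset.sum_mul]
  set SX := ∑ x ∈ X, ∫ m, g m x * q x m ∂ν
  set SA := ∑ a ∈ A, ∫ m, g m a * q a m ∂ν
  have hn0 : (X.card : ℝ) ≠ 0 := hnpos.ne'
  have hk0 : (A.card : ℝ) ≠ 0 := hkpos.ne'
  have hnk0 : (X.card : ℝ) - (A.card : ℝ) ≠ 0 := hnk.ne'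
  field_simp
end

section
/- Let X be a finite set of n points in ℝ^d and A ⊆ X a subset of k points with 1 ≤ k < n. Let ν be a σ-finite measure on ℝ^d, for each z ∈ X let q(·|z) : ℝ^d → (0,∞) be an everywhere strictly positive measurable probability density with respect to ν, and let g(·, z) : ℝ^d → ℝ be measurable with ∫ g(m, z) q(m|z) dν(m) finite for every z ∈ X. Fix λ ∈ [0,1] and s > 0, and define the weighted SISS loss ℓ_{s,λ} as the average over x ∈ X and a ∈ A of ∫ [ (n/(n−k)) · (q(m|x)/q_λ(m|x,a)) · g(m, x) − (1+s) · (k/(n−k)) · (q(m|a)/q_λ(m|x,a)) · g(m, a) ] · q_λ(m|x,a) dν(m), where q_λ(m|x,a) = (1−λ)q(m|x) + λq(m|a). Then ℓ_{s,λ} = L_{X\A} − s · (k/(n−k)) · L_A, where L_{X\A} = (1/(n−k)) Σ_{x ∈ X\A} ∫ g(m, x) q(m|x) dν(m) is the naive deletion loss and L_A = (1/k) Σ_{a ∈ A} ∫ g(m, a) q(m|a) dν(m) is the NegGrad loss. -/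
open MeasureTheory

/-- The weighted SISS loss `ℓ_{s,λ}` (with superfactor `s > 0`) decomposes as the
naive deletion loss minus `s·(k/(n−k))` times the NegGrad loss. -/
theorem weighted_siss_decomposition {d : ℕ} [DecidableEq (EuclideanSpace ℝ (Fin d))]
    (X A : Finset (EuclideanSpace ℝ (Fin d)))
    (hA : A ⊆ X) (hk : 1 ≤ A.card) (hkn : A.card < X.card)
    (ν : Measure (EuclideanSpace ℝ (Fin d))) [SigmaFinite ν]
    (q : EuclideanSpace ℝ (Fin d) → EuclideanSpace ℝ (Fin d) → ℝ)
    (hqm : ∀ z ∈ X, Measurable (q z))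
    (hqpos : ∀ z ∈ X, ∀ m, 0 < q z m)
    (hqP : ∀ z ∈ X,
      IsProbabilityMeasure (ν.withDensity (fun m => ENNReal.ofReal (q z m))))
    (g : EuclideanSpace ℝ (Fin d) → EuclideanSpace ℝ (Fin d) → ℝ)
    (hgm : ∀ z ∈ X, Measurable (fun m => g m z))
    (hgint : ∀ z ∈ X, Integrable (fun m => g m z * q z m) ν)
    (lam : ℝ) (hlam : lam ∈ Set.Icc (0 : ℝ) 1)
    (s : ℝ) (hs : 0 < s) :
    ((X.card : ℝ) * (A.card : ℝ))⁻¹ *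
      ∑ x ∈ X, ∑ a ∈ A,
        ∫ m,
          (((X.card : ℝ) / ((X.card : ℝ) - (A.card : ℝ)))
              * (q x m / ((1 - lam) * q x m + lam * q a m)) * g m x
            - (1 + s) * ((A.card : ℝ) / ((X.card : ℝ) - (A.card : ℝ)))
              * (q a m / ((1 - lam) * q x m + lam * q a m)) * g m a)
          * ((1 - lam) * q x m + lam * q a m) ∂ν
    = (1 / ((X.card : ℝ) - (A.card : ℝ))) * (∑ x ∈ X \ A, ∫ m, g m x * q x m ∂ν)
      - s * ((A.card : ℝ) / ((X.card : ℝ) - (A.card : ℝ)))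
          * ((1 / (A.card : ℝ)) * ∑ a ∈ A, ∫ m, g m a * q a m ∂ν) := by
  set n := (X.card : ℝ)
  set k := (A.card : ℝ)
  have hkpos : (0:ℝ) < k := by simp only [k]; exact_mod_cast hk
  have hnk : (0:ℝ) < n - k := by
    have : (A.card : ℝ) < X.card := by exact_mod_cast hkn
    simp only [n, k]; linarith
  have hnpos : (0:ℝ) < n := by linarith
  set c1 : ℝ := n / (n - k)
  set c2 : ℝ := (1 + s) * (k / (n - k))
  -- Each inner integral simplifies
  have key : ∀ x ∈ X, ∀ a ∈ A,
      (∫ m, ((c1 * (q x m / ((1 - lam) * q x m + lam * q a m)) * g m x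
            - c2 * (q a m / ((1 - lam) * q x m + lam * q a m)) * g m a)
          * ((1 - lam) * q x m + lam * q a m)) ∂ν)
      = c1 * (∫ m, g m x * q x m ∂ν) - c2 * (∫ m, g m a * q a m ∂ν) := by
    intro x hx a ha
    have haX : a ∈ X := hA ha
    have hpos : ∀ m, 0 < (1 - lam) * q x m + lam * q a m := by
      intro m
      rcases lt_or_eq_of_le hlam.2 with h | h
      · have h1 : 0 < (1 - lam) * q x m := mul_pos (by linarith) (hqpos x hx m)
        have h2 : 0 ≤ lam * q a m := mul_nonneg hlam.1 (hqpos a haX m).le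
        linarith
      · have : lam = 1 := h.symm ▸ rfl
        subst this
        have h2 : 0 < 1 * q a m := by simpa using hqpos a haX m
        have h1 : (0:ℝ) ≤ (1 - 1) * q x m := by norm_num
        linarith
    have heq : ∀ m, ((c1 * (q x m / ((1 - lam) * q x m + lam * q a m)) * g m x
            - c2 * (q a m / ((1 - lam) * q x m + lam * q a m)) * g m a)
          * ((1 - lam) * q x m + lam * q a m))
        = c1 * (g m x * q x m) - c2 * (g m a * q a m) := by
      intro m
      have hne := (hpos m).ne'
      calc _ = c1 * g m x * (q x m / ((1 - lam) * q x m + lam * q a m)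
                * ((1 - lam) * q x m + lam * q a m))
            - c2 * g m a * (q a m / ((1 - lam) * q x m + lam * q a m)
                * ((1 - lam) * q x m + lam * q a m)) := by ring
        _ = _ := by rw [div_mul_cancel₀ (q x m) hne, div_mul_cancel₀ (q a m) hne]; ring
    rw [show (fun m => ((c1 * (q x m / ((1 - lam) * q x m + lam * q a m)) * g m x
            - c2 * (q a m / ((1 - lam) * q x m + lam * q a m)) * g m a)
          * ((1 - lam) * q x m + lam * q a m)))
        = fun m => c1 * (g m x * q x m) - c2 * (g m a * q a m) from funext heq]
    rw [integral_sub ((hgint x hx).const_mul c1) ((hgint a haX).const_mul c2),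
      integral_const_mul, integral_const_mul]
  -- rewrite the double sum
  rw [Finset.sum_congr rfl (fun x hx => Finset.sum_congr rfl (fun a ha => key x hx a ha))]
  have hsum : ∑ x ∈ X, ∑ a ∈ A,
      (c1 * (∫ m, g m x * q x m ∂ν) - c2 * (∫ m, g m a * q a m ∂ν))
      = k * c1 * (∑ x ∈ X, ∫ m, g m x * q x m ∂ν)
        - n * c2 * (∑ a ∈ A, ∫ m, g m a * q a m ∂ν) := by
    simp only [Finset.sum_sub_distrib, Finset.sum_const, nsmul_eq_mul,
      ← Finset.mul_sum, ← Finset.sum_mul]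
    push_cast [n, k]
    ring
  rw [hsum]
  have hsplit : (∑ x ∈ X, ∫ m, g m x * q x m ∂ν)
      = (∑ x ∈ X \ A, ∫ m, g m x * q x m ∂ν) + (∑ a ∈ A, ∫ m, g m a * q a m ∂ν) :=
    (Finset.sum_sdiff hA).symm
  rw [hsplit]
  simp only [c1, c2]
  field_simp
  ring
end

section
/- (Convergence of perturbed gradient descent.) Let f : E → ℝ be a differentiable function on E = ℝ^n whose gradient is Lipschitz continuous with constant L > 0, and suppose f is bounded below by f* (f(x) ≥ f* for all x). Fix p ∈ [0,1) and a step size t > 0 such that 1 − p − ε > 0, where ε = (1/2)Lt + Ltp + (1/2)Ltp². Consider iterates x₀, x₁, x₂, … with x_{k+1} = x_k − t(∇f(x_k) + v_k), where each perturbation satisfies ‖v_k‖ ≤ p‖∇f(x_k)‖. Then for every integer T ≥ 1, (1 − p − ε) · t · Σ_{k=0}^{T−1} ‖∇f(x_k)‖² ≤ f(x₀) − f*, and consequently min_{0 ≤ k < T} ‖∇f(x_k)‖² ≤ (f(x₀) − f*) / ((1 − p − ε) · t · T); in particular, for every δ > 0 there exists an index k with ‖∇f(x_k)‖ ≤ δ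 after at most ⌈(f(x₀) − f*) / ((1 − p − ε) t δ²)⌉ iterations. -/
open InnerProductSpace Set

local notation "⟪" a ", " b "⟫" => @inner ℝ _ _ a b

lemma descent_lemma {n : ℕ}
    (f : EuclideanSpace ℝ (Fin n) → ℝ)
    (f' : EuclideanSpace ℝ (Fin n) → EuclideanSpace ℝ (Fin n))
    (hdiff : ∀ x, HasGradientAt f (f' x) x)
    (L : ℝ)
    (hlip : ∀ x y, ‖f' x - f' y‖ ≤ L * ‖x - y‖)
    (a b : EuclideanSpace ℝ (Fin n)) :
    f b ≤ f a + ⟪f' a, b - a⟫ + L / 2 * ‖b - a‖ ^ 2 := by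
  set d := b - a with hd
  have key : ∀ s : ℝ, HasDerivAt (fun s : ℝ => f (a + s • d)) ⟪f' (a + s • d), d⟫ s := by
    intro s
    have h1 : HasDerivAt (fun s : ℝ => a + s • d) d s := by
      simpa using ((hasDerivAt_id s).smul_const d).const_add a
    have h2 := ((hdiff (a + s • d)).hasFDerivAt.comp_hasDerivAt s h1)
    simpa [Function.comp_def] using h2
  set φ : ℝ → ℝ := fun s => f (a + s • d) - s * ⟪f' a, d⟫ - L / 2 * s ^ 2 * ‖d‖ ^ 2 with hφ
  have hφd : ∀ s : ℝ, HasDerivAt φ (⟪f' (a + s • d), d⟫ - ⟪f' a, d⟫ - L * s * ‖d‖ ^ 2) s := by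
    intro s
    have h3 : HasDerivAt (fun s : ℝ => s * ⟪f' a, d⟫) ⟪f' a, d⟫ s := by
      simpa using (hasDerivAt_id s).mul_const ⟪f' a, d⟫
    have h4 : HasDerivAt (fun s : ℝ => L / 2 * s ^ 2 * ‖d‖ ^ 2) (L * s * ‖d‖ ^ 2) s := by
      have := ((hasDerivAt_pow 2 s).const_mul (L / 2)).mul_const (‖d‖ ^ 2)
      exact this.congr_deriv (by norm_num; left; ring)
    exact ((key s).sub h3).sub h4
  have hmono : AntitoneOn φ (Icc 0 1) := by
    apply antitoneOn_of_deriv_nonpos (convex_Icc 0 1)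
    · exact fun s _ => (hφd s).differentiableAt.continuousAt.continuousWithinAt
    · exact fun s _ => (hφd s).differentiableAt.differentiableWithinAt
    · intro s hs
      rw [interior_Icc] at hs
      rw [(hφd s).deriv]
      have hi : ⟪f' (a + s • d) - f' a, d⟫ ≤ L * s * ‖d‖ ^ 2 := by
        calc ⟪f' (a + s • d) - f' a, d⟫ ≤ ‖f' (a + s • d) - f' a‖ * ‖d‖ :=
              real_inner_le_norm _ _
          _ ≤ (L * ‖(a + s • d) - a‖) * ‖d‖ := by
              gcongr; exact hlip _ _
          _ = L * (|s| * ‖d‖) * ‖d‖ := by simp [norm_smul, abs_of_nonneg]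
          _ = L * |s| * ‖d‖ ^ 2 := by ring
          _ = L * s * ‖d‖ ^ 2 := by rw [abs_of_nonneg hs.1.le]
      rw [inner_sub_left] at hi
      linarith
  have h01 := hmono (left_mem_Icc.2 zero_le_one) (right_mem_Icc.2 zero_le_one) zero_le_one
  simp only [hφ, zero_smul, add_zero, one_smul, zero_mul, sub_zero, one_pow, mul_one,
    one_mul] at h01
  have hab : a + d = b := by simp [hd]
  rw [hab] at h01
  have : L / 2 * 1 ^ 2 * ‖d‖ ^ 2 = L / 2 * ‖d‖ ^ 2 := by ring
  linarith [h01]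


/-- Convergence of perturbed gradient descent: for a lower-bounded `f` with
`L`-Lipschitz gradient and perturbed updates `x_{k+1} = x_k − t(∇f(x_k) + v_k)`
with `‖v_k‖ ≤ p‖∇f(x_k)‖`, the weighted sum of squared gradient norms is
bounded by the initial optimality gap, the minimum squared gradient norm over
the first `T` iterates decays like `1/T`, and a `δ`-small gradient is reached
after at most `⌈(f(x₀) − f*)/((1−p−ε)tδ²)⌉` iterations. -/
theorem perturbed_gradient_descent_convergence {n : ℕ}
    (f : EuclideanSpace ℝ (Fin n) → ℝ)
    (f' : EuclideanSpace ℝ (Fin n) → EuclideanSpace ℝ (Fin n))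
    (hdiff : ∀ x, HasGradientAt f (f' x) x)
    (L : ℝ) (hL : 0 < L)
    (hlip : ∀ x y, ‖f' x - f' y‖ ≤ L * ‖x - y‖)
    (fstar : ℝ) (hbdd : ∀ x, fstar ≤ f x)
    (p : ℝ) (hp : 0 ≤ p) (hp1 : p < 1)
    (t : ℝ) (ht : 0 < t)
    (heps : 0 < 1 - p - ((1 / 2) * L * t + L * t * p + (1 / 2) * L * t * p ^ 2))
    (x v : ℕ → EuclideanSpace ℝ (Fin n))
    (hupd : ∀ k, x (k + 1) = x k - t • (f' (x k) + v k))
    (hv : ∀ k, ‖v k‖ ≤ p * ‖f' (x k)‖) :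
    (∀ T : ℕ, 1 ≤ T →
      (1 - p - ((1 / 2) * L * t + L * t * p + (1 / 2) * L * t * p ^ 2)) * t *
          ∑ k ∈ Finset.range T, ‖f' (x k)‖ ^ 2
        ≤ f (x 0) - fstar) ∧
    (∀ T : ℕ, 1 ≤ T → ∃ k < T,
      ‖f' (x k)‖ ^ 2
        ≤ (f (x 0) - fstar) /
            ((1 - p - ((1 / 2) * L * t + L * t * p + (1 / 2) * L * t * p ^ 2)) * t * T)) ∧
    (∀ δ : ℝ, 0 < δ → ∃ k : ℕ,
      k ≤ ⌈(f (x 0) - fstar) /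
            ((1 - p - ((1 / 2) * L * t + L * t * p + (1 / 2) * L * t * p ^ 2)) * t * δ ^ 2)⌉₊ ∧
      ‖f' (x k)‖ ≤ δ) := by
  set c : ℝ := 1 - p - ((1 / 2) * L * t + L * t * p + (1 / 2) * L * t * p ^ 2) with hc
  clear_value c
  have hct : 0 < c * t := mul_pos heps ht
  -- per-step decrease
  have step : ∀ k, c * t * ‖f' (x k)‖ ^ 2 ≤ f (x k) - f (x (k + 1)) := by
    intro k
    have hd := descent_lemma f f' hdiff L hlip (x k) (x (k + 1))
    set g := f' (x k) with hg
    set w := v k with hw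
    have hxy : x (k + 1) - x k = -(t • (g + w)) := by
      rw [hupd k]; abel
    have hinner : ⟪g, x (k + 1) - x k⟫ ≤ -(t * ‖g‖ ^ 2) + t * p * ‖g‖ ^ 2 := by
      rw [hxy, inner_neg_right, real_inner_smul_right, inner_add_right]
      have h1 : ⟪g, g⟫ = ‖g‖ ^ 2 := real_inner_self_eq_norm_sq g
      have h2 : -⟪g, w⟫ ≤ ‖g‖ * ‖w‖ := by
        have := real_inner_le_norm g (-w)
        simpa [inner_neg_right] using this
      have h3 : ‖g‖ * ‖w‖ ≤ ‖g‖ * (p * ‖g‖) :=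
        mul_le_mul_of_nonneg_left (hv k) (norm_nonneg g)
      nlinarith [ht]
    have hnorm : ‖x (k + 1) - x k‖ ≤ t * (1 + p) * ‖g‖ := by
      rw [hxy]
      calc ‖-(t • (g + w))‖ = t * ‖g + w‖ := by
            rw [norm_neg, norm_smul, Real.norm_eq_abs, abs_of_pos ht]
        _ ≤ t * (‖g‖ + ‖w‖) := by gcongr; exact norm_add_le g w
        _ ≤ t * (‖g‖ + p * ‖g‖) := by gcongr; exact hv k
        _ = t * (1 + p) * ‖g‖ := by ring
    have hnorm2 : ‖x (k + 1) - x k‖ ^ 2 ≤ (t * (1 + p) * ‖g‖) ^ 2 := by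
      have := norm_nonneg (x (k + 1) - x k)
      nlinarith
    have hq : L / 2 * ‖x (k + 1) - x k‖ ^ 2 ≤ L / 2 * (t * (1 + p) * ‖g‖) ^ 2 := by
      gcongr
    have hce : c * t * ‖g‖ ^ 2 = t * ‖g‖ ^ 2 - t * p * ‖g‖ ^ 2 - L / 2 * (t * (1 + p) * ‖g‖) ^ 2 := by
      rw [hc]; ring
    linarith [hd, hinner, hq]
  -- telescoping sum
  have tele : ∀ T : ℕ, c * t * ∑ k ∈ Finset.range T, ‖f' (x k)‖ ^ 2 ≤ f (x 0) - f (x T) := by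
    intro T
    induction T with
    | zero => simp
    | succ T ih =>
        rw [Finset.sum_range_succ, mul_add]
        linarith [step T]
  have part1 : ∀ T : ℕ, 1 ≤ T →
      c * t * ∑ k ∈ Finset.range T, ‖f' (x k)‖ ^ 2 ≤ f (x 0) - fstar := by
    intro T _
    linarith [tele T, hbdd (x T)]
  have part2 : ∀ T : ℕ, 1 ≤ T → ∃ k < T,
      ‖f' (x k)‖ ^ 2 ≤ (f (x 0) - fstar) / (c * t * T) := by
    intro T hT
    obtain ⟨k, hk, hmin⟩ := Finset.exists_min_image (Finset.range T)
      (fun k => ‖f' (x k)‖ ^ 2) ⟨0, Finset.mem_range.2 hT⟩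
    refine ⟨k, Finset.mem_range.1 hk, ?_⟩
    have hTpos : (0 : ℝ) < T := by positivity
    rw [le_div_iff₀ (by positivity)]
    have hsum : (T : ℝ) * ‖f' (x k)‖ ^ 2 ≤ ∑ j ∈ Finset.range T, ‖f' (x j)‖ ^ 2 := by
      calc (T : ℝ) * ‖f' (x k)‖ ^ 2 = ∑ _j ∈ Finset.range T, ‖f' (x k)‖ ^ 2 := by
            simp [Finset.sum_const, nsmul_eq_mul]
        _ ≤ _ := Finset.sum_le_sum fun j hj => hmin j hj
    calc ‖f' (x k)‖ ^ 2 * (c * t * T) = c * t * ((T : ℝ) * ‖f' (x k)‖ ^ 2) := by ring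
      _ ≤ c * t * ∑ j ∈ Finset.range T, ‖f' (x j)‖ ^ 2 :=
          mul_le_mul_of_nonneg_left hsum hct.le
      _ ≤ f (x 0) - fstar := part1 T hT
  refine ⟨part1, part2, ?_⟩
  intro δ hδ
  set N : ℕ := ⌈(f (x 0) - fstar) / (c * t * δ ^ 2)⌉₊ with hN
  obtain ⟨k, hkN, hk2⟩ := part2 (N + 1) (Nat.le_add_left 1 N)
  refine ⟨k, Nat.lt_succ_iff.1 hkN, ?_⟩
  have hceil : (f (x 0) - fstar) / (c * t * δ ^ 2) ≤ (N : ℝ) + 1 := by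
    have := Nat.le_ceil ((f (x 0) - fstar) / (c * t * δ ^ 2))
    push_cast at this ⊢
    linarith
  have hgap : f (x 0) - fstar ≤ δ ^ 2 * (c * t * ((N : ℝ) + 1)) := by
    rw [div_le_iff₀ (by positivity)] at hceil
    nlinarith [hceil]
  have hfin : ‖f' (x k)‖ ^ 2 ≤ δ ^ 2 := by
    have hpos : (0 : ℝ) < c * t * ((N : ℝ) + 1) := by positivity
    have h2 : (f (x 0) - fstar) / (c * t * ((N : ℕ) + 1 : ℝ)) ≤ δ ^ 2 := by
      rw [div_le_iff₀ hpos]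
      linarith [hgap]
    calc ‖f' (x k)‖ ^ 2 ≤ (f (x 0) - fstar) / (c * t * ((N : ℕ) + 1 : ℕ)) := hk2
      _ ≤ δ ^ 2 := by push_cast; push_cast at h2; exact h2
  nlinarith [norm_nonneg (f' (x k)), hδ, hfin]
end
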